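/- arXiv:1412.4131 — 2 statements merged into one kernel-verified Lean document; each statement's English description precedes it below -/
import Mathlib

section
/- For any real numbers f ∈ ℝⁿ and c ∈ ℝ, and for any fixed a ∈ Z₂ⁿ, the sum over x ∈ Z₂ⁿ of (−1)^{a·x} cos(f·x + c) equals 2ⁿ · cos(c + Σₘ (aₘπ + fₘ)/2) · Πₘ cos((aₘπ + fₘ)/2). -/
lemma neg_pow_cos (b : Fin 2) (x : ℝ) :
    (-1 : ℝ) ^ b.val * Real.cos x = Real.cos (x + (b.val : ℝ) * Real.pi) := by
  fin_cases b <;> simp [Real.cos_add_pi]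

lemma cos_pair (u θ : ℝ) :
    Real.cos u + Real.cos (u + 2 * θ) = 2 * Real.cos (u + θ) * Real.cos θ := by
  rw [Real.cos_add_cos]
  ring_nf
  simp [Real.cos_neg]

lemma combine (P : ℝ) (b : Fin 2) (S f0 : ℝ) :
    P * Real.cos S + P * Real.cos (f0 + S) * (-1 : ℝ) ^ b.val
      = 2 * Real.cos (((b.val : ℝ) * Real.pi + f0) / 2) *
          (P * Real.cos (S + ((b.val : ℝ) * Real.pi + f0) / 2)) := by
  rw [mul_comm (P * Real.cos (f0 + S)), ← mul_assoc, mul_comm _ P, mul_assoc, neg_pow_cos,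
    show f0 + S + (b.val : ℝ) * Real.pi = S + 2 * (((b.val : ℝ) * Real.pi + f0) / 2) by ring,
    ← mul_add, cos_pair]
  ring

theorem sum_parity_cos_aux : ∀ (n : ℕ) (f : Fin n → ℝ) (c : ℝ) (a : Fin n → Fin 2),
    ∑ x : Fin n → Fin 2,
        (-1 : ℝ) ^ (∑ m, (a m).val * (x m).val) *
          Real.cos ((∑ m, f m * ((x m).val : ℝ)) + c)
      = 2 ^ n * Real.cos (c + ∑ m, (((a m).val : ℝ) * Real.pi + f m) / 2) *
          ∏ m, Real.cos ((((a m).val : ℝ) * Real.pi + f m) / 2) := by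
  intro n
  induction n with
  | zero =>
    intro f c a
    simp
  | succ n ih =>
    intro f c a
    set θ : ℝ := (((a 0).val : ℝ) * Real.pi + f 0) / 2 with hθ
    rw [← Equiv.sum_comp (Fin.consEquiv (fun _ : Fin (n+1) => Fin 2)), Fintype.sum_prod_type,
      Finset.sum_comm]
    have key : ∀ y : Fin n → Fin 2,
        ∑ x₀ : Fin 2,
          (-1 : ℝ) ^ (∑ m, (a m).val * (((Fin.consEquiv (fun _ : Fin (n+1) => Fin 2)) (x₀, y)) m).val) *
            Real.cos ((∑ m, f m * ((((Fin.consEquiv (fun _ : Fin (n+1) => Fin 2)) (x₀, y)) m).val : ℝ)) + c)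
        = 2 * Real.cos θ *
            ((-1 : ℝ) ^ (∑ m, (a m.succ).val * ((y m).val)) *
              Real.cos ((∑ m, f m.succ * ((y m).val : ℝ)) + (c + θ))) := by
      intro y
      rw [Fin.sum_univ_two]
      simp only [Fin.consEquiv_apply, Fin.sum_univ_succ, Fin.cons_zero, Fin.cons_succ]
      norm_num
      rw [pow_add, add_assoc (f 0),
        show ((-1:ℝ)^(a 0).val * (-1:ℝ)^(∑ x : Fin n, (a x.succ).val * (y x).val)) *
            Real.cos (f 0 + ((∑ x : Fin n, f x.succ * ((y x).val : ℝ)) + c))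
          = ((-1:ℝ)^(∑ x : Fin n, (a x.succ).val * (y x).val)) *
            Real.cos (f 0 + ((∑ x : Fin n, f x.succ * ((y x).val : ℝ)) + c)) * (-1:ℝ)^(a 0).val by ring]
      rw [combine ((-1 : ℝ) ^ (∑ x : Fin n, (a x.succ).val * (y x).val)) (a 0)
        ((∑ x : Fin n, f x.succ * ((y x).val : ℝ)) + c) (f 0), ← hθ]
      ring_nf
    rw [Finset.sum_congr rfl (fun y _ => key y), ← Finset.mul_sum, ih]
    rw [Fin.sum_univ_succ, Fin.prod_univ_succ, ← hθ,
      show c + (θ + ∑ m : Fin n, (((a m.succ).val : ℝ) * Real.pi + f m.succ) / 2)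
        = c + θ + ∑ m : Fin n, (((a m.succ).val : ℝ) * Real.pi + f m.succ) / 2 by ring]
    ring


/-- For `f ∈ ℝⁿ`, `c ∈ ℝ` and a fixed bit string `a`,
`∑_{x ∈ Z₂ⁿ} (−1)^{a·x} cos(f·x + c)
  = 2ⁿ cos(c + Σₘ (aₘπ + fₘ)/2) Πₘ cos((aₘπ + fₘ)/2)`. -/
theorem sum_parity_cos (n : ℕ) (f : Fin n → ℝ) (c : ℝ) (a : Fin n → Fin 2) :
    ∑ x : Fin n → Fin 2,
        (-1 : ℝ) ^ (∑ m, (a m).val * (x m).val) *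
          Real.cos ((∑ m, f m * ((x m).val : ℝ)) + c)
      = 2 ^ n * Real.cos (c + ∑ m, (((a m).val : ℝ) * Real.pi + f m) / 2) *
          ∏ m, Real.cos ((((a m).val : ℝ) * Real.pi + f m) / 2) := by
  exact sum_parity_cos_aux n f c a
end

section
/- The full correlation function E(x) = ⟨+|^{⊗n} D(x)† U† X^{⊗n} U D(x) |+⟩^{⊗n} of an n-qubit IQP Bell test, where U is a fixed diagonal unitary and D(x) = ⊗ₘ Dₘ^{xₘ} with each Dₘ a single-qubit diagonal unitary, can be written as a convex-type combination E(x) = Σⱼ pⱼ cos(fⱼ·x + cⱼ) with real weights pⱼ ≥ 0 summing to 1, fⱼ ∈ ℝⁿ, cⱼ ∈ ℝ. -/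
/-- The full correlation function
`E(x) = ⟨+|^{⊗n} D(x)† U† X^{⊗n} U D(x) |+⟩^{⊗n}` of an `n`-qubit IQP Bell test,
with `U` a fixed diagonal unitary and `D(x) = ⊗ₘ Dₘ^{xₘ}` a tensor product of
single-qubit diagonal unitaries `Dₘ = diag(d m 0, d m 1)`, can be written as a
convex combination `E(x) = Σⱼ pⱼ cos(fⱼ·x + cⱼ)`. -/
theorem iqp_correlator_convex_cosines (n : ℕ)
    (U : Matrix (Fin n → Fin 2) (Fin n → Fin 2) ℂ)
    (hUd : U.IsDiag) (hUu : U ∈ Matrix.unitaryGroup (Fin n → Fin 2) ℂ)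
    (d : Fin n → Fin 2 → ℂ) (hd : ∀ m i, ‖d m i‖ = 1)
    (E : (Fin n → Fin 2) → ℂ)
    (hE : ∀ x : Fin n → Fin 2, E x =
      ∑ s : Fin n → Fin 2, ∑ t : Fin n → Fin 2,
        (starRingEnd ℂ)
            (U s s * (∏ m, d m (s m) ^ (x m).val) * ((Real.sqrt 2 : ℝ) : ℂ)⁻¹ ^ n) *
          (if ∀ m, s m ≠ t m then 1 else 0) *
          (U t t * (∏ m, d m (t m) ^ (x m).val) * ((Real.sqrt 2 : ℝ) : ℂ)⁻¹ ^ n)) :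
    ∃ (k : ℕ) (p : Fin k → ℝ) (f : Fin k → Fin n → ℝ) (c : Fin k → ℝ),
      (∀ j, 0 ≤ p j) ∧ (∑ j, p j = 1) ∧
      ∀ x : Fin n → Fin 2,
        E x = ((∑ j, p j * Real.cos ((∑ m, f j m * ((x m).val : ℝ)) + c j) : ℝ) : ℂ) := by
  classical
  -- the bit-flip involution
  set σ : (Fin n → Fin 2) → (Fin n → Fin 2) := fun s m => s m + 1 with hσdef
  have hflip : ∀ a : Fin 2, a + 1 + 1 = a := by decide
  have hσσ : Function.Involutive σ := by
    intro s; funext m; exact hflip (s m)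
  -- diagonal entries of U have modulus 1
  have hU1 : ∀ s, ‖U s s‖ = 1 := by
    intro s
    have h := Matrix.mem_unitaryGroup_iff'.mp hUu
    have h2 : (star U * U) s s = 1 := by rw [h]; simp [Matrix.one_apply]
    rw [Matrix.mul_apply] at h2
    have h3 : ∑ t, (star U) s t * U t s = (starRingEnd ℂ) (U s s) * U s s := by
      rw [Finset.sum_eq_single s]
      · rw [Matrix.star_apply]; rfl
      · intro t _ hts
        have : U t s = 0 := hUd hts
        simp [this]
      · simp
    rw [h3] at h2
    have h4 : ((Complex.normSq (U s s) : ℝ) : ℂ) = 1 := by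
      rw [Complex.normSq_eq_conj_mul_self]; exact h2
    have h4' : Complex.normSq (U s s) = 1 := by exact_mod_cast h4
    have h5 : ‖U s s‖ ^ 2 = 1 := by rw [Complex.sq_norm, h4']
    nlinarith [norm_nonneg (U s s)]
  -- the paired phases
  set w : (Fin n → Fin 2) → Fin n → ℂ :=
    fun s m => (starRingEnd ℂ) (d m (s m)) * d m (s m + 1) with hwdef
  set g : (Fin n → Fin 2) → ℂ :=
    fun s => (starRingEnd ℂ) (U s s) * U (σ s) (σ s) with hgdef
  have hdabs : ∀ m i, ‖d m i‖ = 1 := by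
    intro m i; exact hd m i
  have hwabs : ∀ s m, ‖w s m‖ = 1 := by
    intro s m; simp [hwdef, map_mul, hdabs]
  have hgabs : ∀ s, ‖g s‖ = 1 := by
    intro s; simp [hgdef, map_mul, hU1]
  -- the complex term
  set C : (Fin n → Fin 2) → (Fin n → Fin 2) → ℂ :=
    fun s x => (2 : ℂ)⁻¹ ^ n * (g s * ∏ m, w s m ^ (x m).val) with hCdef
  -- Step 1 : E x = ∑ s, C s x
  have step1 : ∀ x, E x = ∑ s, C s x := by
    intro x
    rw [hE x]
    refine Finset.sum_congr rfl fun s _ => ?_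
    rw [Finset.sum_eq_single (σ s)]
    · have hcond : ∀ m, s m ≠ σ s m := by
        intro m
        have : ∀ a : Fin 2, a ≠ a + 1 := by decide
        exact this (s m)
      rw [if_pos hcond]
      simp only [map_mul, map_prod, map_pow, map_inv₀, Complex.conj_ofReal, mul_one]
      have hr : (((Real.sqrt 2 : ℝ) : ℂ)⁻¹ ^ n) * (((Real.sqrt 2 : ℝ) : ℂ)⁻¹ ^ n)
          = (2 : ℂ)⁻¹ ^ n := by
        rw [← mul_pow, ← mul_inv, ← Complex.ofReal_mul, Real.mul_self_sqrt (by norm_num)]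
        norm_num
      have hprod : (∏ m, (starRingEnd ℂ) (d m (s m)) ^ (x m).val) *
          (∏ m, d m (σ s m) ^ (x m).val) = ∏ m, w s m ^ (x m).val := by
        rw [← Finset.prod_mul_distrib]
        refine Finset.prod_congr rfl fun m _ => ?_
        rw [← mul_pow]
      calc ((starRingEnd ℂ) (U s s) * (∏ m, (starRingEnd ℂ) (d m (s m)) ^ (x m).val) *
              ((Real.sqrt 2 : ℝ) : ℂ)⁻¹ ^ n) *
            (U (σ s) (σ s) * (∏ m, d m (σ s m) ^ (x m).val) *
              ((Real.sqrt 2 : ℝ) : ℂ)⁻¹ ^ n)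
          = ((((Real.sqrt 2 : ℝ) : ℂ)⁻¹ ^ n) * (((Real.sqrt 2 : ℝ) : ℂ)⁻¹ ^ n)) *
            (((starRingEnd ℂ) (U s s) * U (σ s) (σ s)) *
              ((∏ m, (starRingEnd ℂ) (d m (s m)) ^ (x m).val) *
                (∏ m, d m (σ s m) ^ (x m).val))) := by ring
        _ = C s x := by rw [hr, hprod]
    · intro t _ hts
      have hni : ¬ (∀ m, s m ≠ t m) := by
        intro hall
        apply hts
        funext m
        have h2 : ∀ a b : Fin 2, a ≠ b → b = a + 1 := by decide
        exact h2 (s m) (t m) (hall m)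
      rw [if_neg hni, mul_zero, zero_mul]
    · simp
  -- Step 2 : conjugation symmetry
  have step2 : ∀ s x, C (σ s) x = (starRingEnd ℂ) (C s x) := by
    intro s x
    have hgσ : g (σ s) = (starRingEnd ℂ) (g s) := by
      simp only [hgdef, hσσ s, map_mul, Complex.conj_conj]
      ring
    have hwσ : ∀ m, w (σ s) m = (starRingEnd ℂ) (w s m) := by
      intro m
      simp only [hwdef, hσdef, map_mul, Complex.conj_conj, hflip]
      ring
    simp only [hCdef, hgσ, hwσ, map_mul, map_pow, map_prod, map_inv₀, map_ofNat]
  -- phases as angles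
  set fr : (Fin n → Fin 2) → Fin n → ℝ := fun s m => (w s m).arg with hfrdef
  set cr : (Fin n → Fin 2) → ℝ := fun s => (g s).arg with hcrdef
  have hexp : ∀ (z : ℂ), ‖z‖ = 1 → Complex.exp (z.arg * Complex.I) = z := by
    intro z h
    have := Complex.norm_mul_exp_arg_mul_I z
    rw [h] at this; simpa using this
  -- Step 3 : exponential form of C
  have step3 : ∀ s x, C s x = (((2 : ℝ)⁻¹ ^ n : ℝ) : ℂ) *
      Complex.exp ((((∑ m, fr s m * ((x m).val : ℝ)) + cr s : ℝ)) * Complex.I) := by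
    intro s x
    have hg' : g s = Complex.exp ((cr s : ℝ) * Complex.I) := (hexp _ (hgabs s)).symm
    have hw' : ∀ m, w s m ^ (x m).val =
        Complex.exp (((fr s m * ((x m).val : ℝ) : ℝ)) * Complex.I) := by
      intro m
      conv_lhs => rw [← hexp _ (hwabs s m)]
      rw [← Complex.exp_nat_mul]
      congr 1
      push_cast
      ring
    simp only [hCdef]
    rw [hg', Finset.prod_congr rfl (fun m _ => hw' m), ← Complex.exp_sum, ← Complex.exp_add]
    congr 1
    · push_cast; norm_num
    · congr 1
      push_cast
      rw [add_mul, Finset.sum_mul, add_comm]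
  -- Step 4 : E is real
  have step4 : ∀ x, E x = (((E x).re : ℝ) : ℂ) := by
    intro x
    have hconj : (starRingEnd ℂ) (E x) = E x := by
      calc (starRingEnd ℂ) (E x) = ∑ s, (starRingEnd ℂ) (C s x) := by
            rw [step1 x, map_sum]
        _ = ∑ s, C (σ s) x := Finset.sum_congr rfl fun s _ => (step2 s x).symm
        _ = ∑ s, C s x := Equiv.sum_comp (Function.Involutive.toPerm σ hσσ) (fun s => C s x)
        _ = E x := (step1 x).symm
    exact (Complex.conj_eq_iff_re.mp hconj).symm
  -- Step 5 : real part of each term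
  have step5 : ∀ s x, (C s x).re =
      (2 : ℝ)⁻¹ ^ n * Real.cos ((∑ m, fr s m * ((x m).val : ℝ)) + cr s) := by
    intro s x
    rw [step3 s x, Complex.re_ofReal_mul, Complex.exp_ofReal_mul_I_re]
  -- conclusion
  have hcard : Fintype.card (Fin n → Fin 2) = 2 ^ n := by simp
  set e : Fin (2 ^ n) ≃ (Fin n → Fin 2) := (Fintype.equivFinOfCardEq hcard).symm with hedef
  refine ⟨2 ^ n, fun _ => (2 : ℝ)⁻¹ ^ n, fun j => fr (e j), fun j => cr (e j), ?_, ?_, ?_⟩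
  · intro j; positivity
  · rw [Finset.sum_const, Finset.card_univ, Fintype.card_fin, nsmul_eq_mul]
    push_cast
    rw [← mul_pow]
    norm_num
  · intro x
    rw [step4 x]
    congr 1
    have hRHS : ∑ j : Fin (2 ^ n),
        (2 : ℝ)⁻¹ ^ n * Real.cos ((∑ m, fr (e j) m * ((x m).val : ℝ)) + cr (e j))
        = ∑ s, (2 : ℝ)⁻¹ ^ n * Real.cos ((∑ m, fr s m * ((x m).val : ℝ)) + cr s) :=
      Equiv.sum_comp e (fun s => (2 : ℝ)⁻¹ ^ n *
        Real.cos ((∑ m, fr s m * ((x m).val : ℝ)) + cr s))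
    rw [hRHS, step1 x, Complex.re_sum]
    exact Finset.sum_congr rfl fun s _ => step5 s x
end
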